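/- arXiv:2107.05696 — 3 statements merged into one kernel-verified Lean document; each statement's English description precedes it below -/
import Mathlib

section
/- Let X be a skew brace. The map S : X × X → X × X defined by S(x,y) = (x^∘ ∘ (x * y), y^∘ ∘ (x * y)) is a bijection, with inverse S⁻¹(x,y) = ( ((x ∘ y^∘) * x^*)^∘ , ((x ∘ y^∘) * x^*)^∘ ∘ x ∘ y^∘ ). -/
structure SkewBrace (X : Type*) where
  circ : X → X → X
  cinv : X → X
  ce : X
  star : X → X → X
  sinv : X → X
  se : X
  circ_assoc : ∀ a b c, circ (circ a b) c = circ a (circ b c)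
  ce_circ : ∀ a, circ ce a = a
  circ_ce : ∀ a, circ a ce = a
  cinv_circ : ∀ a, circ (cinv a) a = ce
  circ_cinv : ∀ a, circ a (cinv a) = ce
  star_assoc : ∀ a b c, star (star a b) c = star a (star b c)
  se_star : ∀ a, star se a = a
  star_se : ∀ a, star a se = a
  sinv_star : ∀ a, star (sinv a) a = se
  star_sinv : ∀ a, star a (sinv a) = se
  distrib : ∀ x y z, circ x (star y z) = star (star (circ x y) (sinv x)) (circ x z)

def SkewBrace.tri {X : Type*} (B : SkewBrace X) (x y : X) : X :=
  B.circ (B.cinv y) (B.star x y)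

def SkewBrace.ov {X : Type*} (B : SkewBrace X) (x y : X) : X :=
  B.circ (B.cinv y) (B.star y x)

def SkewBrace.triInv {X : Type*} (B : SkewBrace X) (x y : X) : X :=
  B.star (B.circ y x) (B.sinv y)

def SkewBrace.ovInv {X : Type*} (B : SkewBrace X) (x y : X) : X :=
  B.star (B.sinv y) (B.circ y x)

namespace SkewBrace
variable {X : Type*} (B : SkewBrace X)

lemma circ_cinv_cancel (a b : X) : B.circ a (B.circ (B.cinv a) b) = b := by
  rw [← B.circ_assoc, B.circ_cinv, B.ce_circ]

lemma cinv_circ_cancel (a b : X) : B.circ (B.cinv a) (B.circ a b) = b := by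
  rw [← B.circ_assoc, B.cinv_circ, B.ce_circ]

lemma star_sinv_cancel (a b : X) : B.star a (B.star (B.sinv a) b) = b := by
  rw [← B.star_assoc, B.star_sinv, B.se_star]

lemma sinv_star_cancel (a b : X) : B.star (B.sinv a) (B.star a b) = b := by
  rw [← B.star_assoc, B.sinv_star, B.se_star]

lemma star_left_cancel {a b c : X} (h : B.star a b = B.star a c) : b = c := by
  have := congrArg (B.star (B.sinv a)) h
  rwa [B.sinv_star_cancel, B.sinv_star_cancel] at this

lemma circ_left_cancel {a b c : X} (h : B.circ a b = B.circ a c) : b = c := by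
  have := congrArg (B.circ (B.cinv a)) h
  rwa [B.cinv_circ_cancel, B.cinv_circ_cancel] at this

lemma sinv_sinv (a : X) : B.sinv (B.sinv a) = a := by
  apply B.star_left_cancel (a := B.sinv a)
  rw [B.star_sinv, B.sinv_star]

lemma cinv_cinv (a : X) : B.cinv (B.cinv a) = a := by
  apply B.circ_left_cancel (a := B.cinv a)
  rw [B.circ_cinv, B.cinv_circ]

lemma sinv_star' (a b : X) : B.sinv (B.star a b) = B.star (B.sinv b) (B.sinv a) := by
  apply B.star_left_cancel (a := B.star a b)
  rw [B.star_sinv, B.star_assoc, B.star_sinv_cancel, B.star_sinv]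

lemma cinv_circ' (a b : X) : B.cinv (B.circ a b) = B.circ (B.cinv b) (B.cinv a) := by
  apply B.circ_left_cancel (a := B.circ a b)
  rw [B.circ_cinv, B.circ_assoc, B.circ_cinv_cancel, B.circ_cinv]

lemma circ_se (a : X) : B.circ a B.se = a := by
  have h := B.distrib a B.se B.se
  rw [B.se_star] at h
  -- h : a∘se = ((a∘se)*a^s)*(a∘se)
  have h2 : B.star (B.sinv (B.circ a B.se)) (B.circ a B.se)
      = B.star (B.sinv (B.circ a B.se)) (B.star (B.star (B.circ a B.se) (B.sinv a)) (B.circ a B.se)) := by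
    rw [← h]
  rw [B.sinv_star, ← B.star_assoc, ← B.star_assoc, B.sinv_star, B.se_star] at h2
  -- h2 : se = a^s * (a∘se)
  have := congrArg (B.star a) h2
  rw [B.star_se, B.star_sinv_cancel] at this
  exact this.symm

lemma se_eq_ce : B.se = B.ce := by
  have := B.circ_se B.ce
  rw [B.ce_circ] at this
  exact this

lemma circ_sinv (x y : X) :
    B.circ x (B.sinv y) = B.star (B.star x (B.sinv (B.circ x y))) x := by
  have h := B.distrib x y (B.sinv y)
  rw [B.star_sinv, B.circ_se, B.star_assoc] at h
  -- h : x = (x∘y) * (x^s * (x∘y^s))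
  have h2 : B.star (B.sinv (B.circ x y)) x = B.star (B.sinv x) (B.circ x (B.sinv y)) := by
    nth_rewrite 2 [h]
    rw [B.sinv_star_cancel]
  have := congrArg (B.star x) h2
  rw [B.star_sinv_cancel, ← B.star_assoc] at this
  exact this.symm

end SkewBrace

namespace SkewBrace
variable {X : Type*} (B : SkewBrace X)

lemma lam (x t : X) :
    B.circ (B.cinv x) (B.star x t)
      = B.star (B.sinv (B.cinv x)) (B.circ (B.cinv x) t) := by
  rw [B.distrib, B.cinv_circ, ← B.se_eq_ce, B.se_star]

-- left inverse computation, first component (as a star equation)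
lemma key1 (x y : X) :
    B.star (B.circ (B.circ (B.cinv x) (B.star x y))
        (B.cinv (B.circ (B.cinv y) (B.star x y))))
      (B.sinv (B.circ (B.cinv x) (B.star x y))) = B.cinv x := by
  rw [B.cinv_circ' (B.cinv y), B.cinv_cinv, ← B.circ_assoc (B.circ (B.cinv x) (B.star x y)),
    B.circ_assoc (B.cinv x), B.circ_cinv, B.circ_ce]
  -- now LHS = star (circ (cinv x) y) (sinv u) with u = circ (cinv x) (star x y)
  rw [B.lam, B.sinv_star', B.sinv_sinv, ← B.star_assoc, B.star_sinv, B.se_star]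

end SkewBrace

namespace SkewBrace
variable {X : Type*} (B : SkewBrace X)

lemma key2 (x y : X) :
    B.circ (B.circ x (B.circ (B.cinv x) (B.star x y)))
      (B.cinv (B.circ (B.cinv y) (B.star x y))) = y := by
  rw [B.circ_cinv_cancel, B.cinv_circ', B.cinv_cinv, B.circ_cinv_cancel]

lemma key3' (u v z w : X) (hz : z = B.circ u (B.cinv v)) (hw : w = B.star z (B.sinv u)) :
    B.circ (B.cinv (B.cinv w))
      (B.star (B.cinv w) (B.circ (B.circ (B.cinv w) u) (B.cinv v))) = u := by
  have hb : B.circ (B.circ (B.cinv w) u) (B.cinv v) = B.circ (B.cinv w) z := by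
    rw [B.circ_assoc, hz]
  rw [hb, B.lam, B.cinv_cinv, B.circ_cinv_cancel, hw, B.sinv_star',
    B.sinv_sinv, B.star_assoc, B.sinv_star, B.star_se]

lemma key4' (u v z w : X) (hz : z = B.circ u (B.cinv v)) (hw : w = B.star z (B.sinv u)) :
    B.circ (B.cinv (B.circ (B.circ (B.cinv w) u) (B.cinv v)))
      (B.star (B.cinv w) (B.circ (B.circ (B.cinv w) u) (B.cinv v))) = v := by
  have hb : B.circ (B.circ (B.cinv w) u) (B.cinv v) = B.circ (B.cinv w) z := by
    rw [B.circ_assoc, hz]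
  rw [hb]
  have h1 : B.cinv (B.circ (B.cinv w) z)
      = B.star (B.sinv (B.circ (B.cinv z) u)) (B.cinv z) := by
    rw [B.cinv_circ', B.cinv_cinv, hw, B.lam, B.circ_sinv, B.star_assoc,
      B.sinv_star_cancel]
  have h2 : B.circ (B.cinv (B.circ (B.cinv w) z)) (B.cinv w) = B.cinv z := by
    rw [B.cinv_circ', B.circ_assoc, B.cinv_circ, B.circ_ce]
  have h3 : B.sinv (B.cinv (B.circ (B.cinv w) z))
      = B.star (B.sinv (B.cinv z)) (B.circ (B.cinv z) u) := by
    rw [h1, B.sinv_star', B.sinv_sinv]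
  rw [B.distrib, B.cinv_circ, ← B.se_eq_ce, B.star_se, h2, h3, B.star_sinv_cancel,
    hz, B.cinv_circ', B.cinv_cinv, B.circ_assoc, B.cinv_circ, B.circ_ce]

end SkewBrace

theorem skewBrace_S_bijective {X : Type*} (B : SkewBrace X) :
    Function.Bijective (fun p : X × X =>
      (B.circ (B.cinv p.1) (B.star p.1 p.2), B.circ (B.cinv p.2) (B.star p.1 p.2))) ∧
    Function.LeftInverse
      (fun p : X × X =>
        (B.cinv (B.star (B.circ p.1 (B.cinv p.2)) (B.sinv p.1)),
         B.circ (B.circ (B.cinv (B.star (B.circ p.1 (B.cinv p.2)) (B.sinv p.1))) p.1) (B.cinv p.2)))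
      (fun p : X × X =>
        (B.circ (B.cinv p.1) (B.star p.1 p.2), B.circ (B.cinv p.2) (B.star p.1 p.2))) ∧
    Function.RightInverse
      (fun p : X × X =>
        (B.cinv (B.star (B.circ p.1 (B.cinv p.2)) (B.sinv p.1)),
         B.circ (B.circ (B.cinv (B.star (B.circ p.1 (B.cinv p.2)) (B.sinv p.1))) p.1) (B.cinv p.2)))
      (fun p : X × X =>
        (B.circ (B.cinv p.1) (B.star p.1 p.2), B.circ (B.cinv p.2) (B.star p.1 p.2))) := by
  have hL : Function.LeftInverse
      (fun p : X × X =>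
        (B.cinv (B.star (B.circ p.1 (B.cinv p.2)) (B.sinv p.1)),
         B.circ (B.circ (B.cinv (B.star (B.circ p.1 (B.cinv p.2)) (B.sinv p.1))) p.1) (B.cinv p.2)))
      (fun p : X × X =>
        (B.circ (B.cinv p.1) (B.star p.1 p.2), B.circ (B.cinv p.2) (B.star p.1 p.2))) := by
    rintro ⟨x, y⟩
    simp only [Prod.mk.injEq]
    refine ⟨?_, ?_⟩
    · rw [B.key1, B.cinv_cinv]
    · rw [B.key1, B.cinv_cinv]
      exact B.key2 x y
  have hR : Function.RightInverse
      (fun p : X × X =>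
        (B.cinv (B.star (B.circ p.1 (B.cinv p.2)) (B.sinv p.1)),
         B.circ (B.circ (B.cinv (B.star (B.circ p.1 (B.cinv p.2)) (B.sinv p.1))) p.1) (B.cinv p.2)))
      (fun p : X × X =>
        (B.circ (B.cinv p.1) (B.star p.1 p.2), B.circ (B.cinv p.2) (B.star p.1 p.2))) := by
    rintro ⟨u, v⟩
    simp only [Prod.mk.injEq]
    exact ⟨B.key3' u v _ _ rfl rfl, B.key4' u v _ _ rfl rfl⟩
  exact ⟨⟨hL.injective, hR.surjective⟩, hL, hR⟩
end

section
/- Let X be a skew brace with operations x ▷ y = y^∘ ∘ (x * y) and x ◁ y = y^∘ ∘ (y * x). Then for all x, y, z ∈ X the third exchange law holds: (x ◁ y) ◁ (z ◁ y) = (x ◁ z) ◁ (y ▷ z). -/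
namespace SkewBrace

variable {X : Type*} (B : SkewBrace X)

lemma cinv_unique {a b : X} (h : B.circ b a = B.ce) : b = B.cinv a := by
  have : B.circ (B.circ b a) (B.cinv a) = B.circ B.ce (B.cinv a) := by rw [h]
  rwa [B.circ_assoc, B.circ_cinv, B.circ_ce, B.ce_circ] at this

/-- the lambda map -/
def lam_s9 (a u : X) : X := B.star (B.sinv a) (B.circ a u)

lemma sinv_circ_eq (a b : X) :
    B.sinv (B.circ a b) = B.star (B.star (B.sinv a) (B.circ a (B.sinv b))) (B.sinv a) := by
  have h := B.distrib a b (B.sinv b)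
  rw [B.star_sinv, B.circ_se] at h
  -- h : a = ((a∘b) * sinv a) * (a∘ sinv b)
  apply B.star_left_cancel (a := B.circ a b)
  rw [B.star_sinv, ← B.star_assoc, ← B.star_assoc, ← h, B.star_sinv]

lemma lam_circ (a b u : X) : B.lam_s9 (B.circ a b) u = B.lam_s9 a (B.lam_s9 b u) := by
  unfold lam_s9
  rw [B.sinv_circ_eq, B.distrib a (B.sinv b) (B.circ b u), B.circ_assoc]
  simp only [B.star_assoc]

lemma ov_eq_lam (x y : X) : B.ov x y = B.lam_s9 (B.cinv y) x := by
  unfold ov lam_s9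
  rw [B.distrib, B.cinv_circ, ← B.se_eq_ce, B.se_star]

lemma circ_ov (y z : X) : B.circ y (B.ov z y) = B.star y z := by
  unfold ov
  rw [← B.circ_assoc, B.circ_cinv, B.ce_circ]

lemma circ_tri (y z : X) : B.circ z (B.tri y z) = B.star y z := by
  unfold tri
  rw [← B.circ_assoc, B.circ_cinv, B.ce_circ]

end SkewBrace

theorem skewBrace_third_exchange {X : Type*} (B : SkewBrace X) (x y z : X) :
    B.ov (B.ov x y) (B.ov z y) = B.ov (B.ov x z) (B.tri y z) := by
  rw [B.ov_eq_lam x y, B.ov_eq_lam _ (B.ov z y), B.ov_eq_lam x z, B.ov_eq_lam _ (B.tri y z),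
    ← B.lam_circ, ← B.lam_circ, ← B.cinv_circ', ← B.cinv_circ', B.circ_ov, B.circ_tri]
end

section
/- Let X be a skew brace in which the operation * is commutative. Then the map r : X × X → X × X defined by r(x,y) = ( x^* * (x ∘ y), (x^* * (x ∘ y))^∘ ∘ x ∘ y ) satisfies r ∘ r = id. -/
theorem skewBrace_involutive_of_star_comm {X : Type*} (B : SkewBrace X)
    (hcomm : ∀ a b : X, B.star a b = B.star b a) :
    (fun p : X × X =>
        (B.star (B.sinv p.1) (B.circ p.1 p.2),
         B.circ (B.circ (B.cinv (B.star (B.sinv p.1) (B.circ p.1 p.2))) p.1) p.2)) ∘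
    (fun p : X × X =>
        (B.star (B.sinv p.1) (B.circ p.1 p.2),
         B.circ (B.circ (B.cinv (B.star (B.sinv p.1) (B.circ p.1 p.2))) p.1) p.2)) = id := by
  funext p
  obtain ⟨x, y⟩ := p
  simp only [Function.comp_apply, id_eq]
  set u := B.star (B.sinv x) (B.circ x y) with hu
  set v := B.circ (B.circ (B.cinv u) x) y with hv
  have huv : B.circ u v = B.circ x y := by
    rw [hv, ← B.circ_assoc, ← B.circ_assoc, B.circ_cinv, B.ce_circ]
  have hux : B.star x u = B.circ x y := by
    rw [hu, ← B.star_assoc, B.star_sinv, B.se_star]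
  have h1 : B.star (B.sinv u) (B.circ u v) = x := by
    rw [huv, ← hux, hcomm x u, ← B.star_assoc, B.sinv_star, B.se_star]
  have h2 : B.circ (B.circ (B.cinv (B.star (B.sinv u) (B.circ u v))) u) v = y := by
    rw [h1, B.circ_assoc, huv, ← B.circ_assoc, B.cinv_circ, B.ce_circ]
  exact Prod.ext h1 h2
end
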